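/- Let 0 < α < 1/M, β > 0 and d ∈ ℝ^N with d_m > 0 for all m. If x ∈ ℝ^N is a fixed point of the reference dynamical system, i.e. x = F(x) − β d, then x_m < −β d_m < 0 for every m = 1, …, N; in particular every component of the fixed point is strictly negative. -/

import Mathlib

/-- The αβ-HMM log-belief-ratio mapping `F`, defined componentwise for `m = 1, …, M-1` by
`F_m(x) = log(((1 - αM)·exp(x_m) + α + α·Σ_n exp(x_n)) / (1 - αM + α + α·Σ_n exp(x_n)))`. -/
noncomputable def abHMM.F (α : ℝ) (M : ℕ) (x : Fin (M - 1) → ℝ) : Fin (M - 1) → ℝ :=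
  fun m => Real.log (((1 - α * M) * Real.exp (x m) + α + α * ∑ n, Real.exp (x n)) /
    (1 - α * M + α + α * ∑ n, Real.exp (x n)))

/-- any fixed point `x` of the reference dynamical system `x = F(x) - β d`
satisfies `x_m < -β d_m < 0` for every `m`; in particular all its components are
strictly negative. -/
theorem abHMM_fixed_point_strictly_negative (M : ℕ) (hM : 2 ≤ M) (α β : ℝ)
    (hα : 0 < α) (hα' : α < 1 / M) (hβ : 0 < β)
    (d : Fin (M - 1) → ℝ) (hd : ∀ m, 0 < d m)
    (x : Fin (M - 1) → ℝ) (hfix : x = fun m => abHMM.F α M x m - β * d m) :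
    ∀ m, x m < -(β * d m) ∧ -(β * d m) < 0 := by
  intro m
  have hM0 : (0:ℝ) < M := by positivity
  have hαM : α * M < 1 := by
    have := (lt_div_iff₀ hM0).mp hα'
    linarith
  have hS : (0:ℝ) ≤ ∑ n, Real.exp (x n) :=
    Finset.sum_nonneg fun n _ => (Real.exp_pos _).le
  set S := ∑ n, Real.exp (x n) with hSdef
  have hA : 0 < α + α * S := by have := mul_nonneg hα.le hS; linarith
  have hden : 0 < 1 - α * M + α + α * S := by linarith
  have hnum : 0 < (1 - α * M) * Real.exp (x m) + α + α * S := by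
    have := Real.exp_pos (x m)
    nlinarith
  have hfixm : x m = abHMM.F α M x m - β * d m := by
    conv_lhs => rw [hfix]
  have hbd : 0 < β * d m := mul_pos hβ (hd m)
  -- First show x m < 0
  have hxm : x m < 0 := by
    by_contra h
    push_neg at h
    have he : (1:ℝ) ≤ Real.exp (x m) := Real.one_le_exp h
    have hle : (1 - α * M) * Real.exp (x m) + α + α * S ≤
        Real.exp (x m) * (1 - α * M + α + α * S) := by nlinarith
    have hF : abHMM.F α M x m ≤ x m := by
      unfold abHMM.F
      rw [← hSdef]
      calc Real.log (((1 - α * M) * Real.exp (x m) + α + α * S) / (1 - α * M + α + α * S))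
          ≤ Real.log (Real.exp (x m)) := by
            apply Real.log_le_log (div_pos hnum hden)
            rw [div_le_iff₀ hden]; exact hle
        _ = x m := Real.log_exp _
    linarith [hfixm, hF]
  -- Now x m < 0 gives exp (x m) < 1 so F < 0
  have he : Real.exp (x m) < 1 := Real.exp_lt_one_iff.mpr hxm
  have hlt : (1 - α * M) * Real.exp (x m) + α + α * S < 1 - α * M + α + α * S := by
    nlinarith
  have hF : abHMM.F α M x m < 0 := by
    unfold abHMM.F
    rw [← hSdef]
    apply Real.log_neg (div_pos hnum hden)
    rw [div_lt_one hden]; exact hlt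
  exact ⟨by linarith [hfixm], by linarith⟩
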